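/- Let R be a finite commutative principal ideal ring, decomposed via the structure theorem as R ≅ R_(1) × ⋯ × R_(ρ) where each R_(j) is a finite chain ring, and for j ∈ {1,…,ρ} let Φ_(j) denote the j-th projection map applied coefficient-by-coefficient. Then for any R-submodule N of R^n, rk_R(N) = max_{1 ≤ j ≤ ρ} rk_{R_(j)}(Φ_(j)(N)). -/

import Mathlib

open IsLocalRing

/-- The rank of a submodule `N`: the smallest number of elements generating `N`. -/
noncomputable def subrank {R M : Type*} [Semiring R] [AddCommMonoid M] [Module R M]
    (N : Submodule R M) : ℕ :=
  sInf {k | ∃ f : Fin k → M, Submodule.span R (Set.range f) = N}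

/-- The rank of a vector `u ∈ S^n` over `R`: the smallest number of generators of the
`R`-submodule of `S` generated by the coordinates of `u` (i.e. of the support of `u`). -/
noncomputable def vecrank (R : Type*) {S : Type*} {n : ℕ} [Semiring R] [AddCommMonoid S]
    [Module R S] (u : Fin n → S) : ℕ :=
  subrank (Submodule.span R (Set.range u))

/-- The minimum rank distance of a linear code `C ⊆ S^n`, ranks being taken over `K`. -/
noncomputable def minrkdist (K : Type*) {S : Type*} {n : ℕ} [Semiring K] [Ring S]
    [Module K S] (C : Submodule S (Fin n → S)) : ℕ :=
  sInf {d | ∃ u ∈ C, ∃ v ∈ C, u ≠ v ∧ vecrank K (u - v) = d}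

section Aux

variable {ι : Type*} [Fintype ι] {Rc : ι → Type*} [∀ j, CommRing (Rc j)] {n : ℕ}

/-- Coefficient-wise `j`-th projection, as a semilinear map. -/
def projL (Rc : ι → Type*) [∀ j, CommRing (Rc j)] (n : ℕ) (j : ι) :
    (Fin n → ∀ j', Rc j') →ₛₗ[Pi.evalRingHom Rc j] (Fin n → Rc j) where
  toFun v := fun m => v m j
  map_add' _ _ := rfl
  map_smul' _ _ := rfl

instance evalSurj (j : ι) : RingHomSurjective (Pi.evalRingHom Rc j) := by
  classical
  exact ⟨fun r => ⟨Pi.single j r, Pi.single_eq_same j r⟩⟩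

lemma exists_fin_span {R M : Type*} [Semiring R] [AddCommMonoid M] [Module R M] [Finite M]
    (N : Submodule R M) : ∃ k, ∃ f : Fin k → M, Submodule.span R (Set.range f) = N := by
  obtain ⟨m, ⟨e⟩⟩ := Finite.exists_equiv_fin N
  refine ⟨m, fun i => (e.symm i : M), ?_⟩
  have : Set.range (fun i => ((e.symm i : N) : M)) = (N : Set M) := by
    ext x
    constructor
    · rintro ⟨i, rfl⟩; exact (e.symm i).2
    · intro hx; exact ⟨e ⟨x, hx⟩, by simp⟩
  rw [this, Submodule.span_eq]

variable [DecidableEq ι]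

lemma sum_single_smul (x : Fin n → ∀ j, Rc j) :
    ∑ j : ι, (Pi.single j (1 : Rc j) : ∀ j', Rc j') • x = x := by
  funext m j'
  simp only [Finset.sum_apply, Pi.smul_apply, smul_eq_mul, Pi.mul_apply]
  rw [Finset.sum_eq_single j']
  · simp
  · intro b _ hb
    simp [Pi.single_apply, hb]
  · simp

lemma mem_of_proj (N : Submodule (∀ j, Rc j) (Fin n → ∀ j, Rc j)) (x : Fin n → ∀ j, Rc j)
    (h : ∀ j, projL Rc n j x ∈ N.map (projL Rc n j)) : x ∈ N := by
  choose y hy hyx using fun j => h j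
  have hx : x = ∑ j : ι, (Pi.single j (1 : Rc j) : ∀ j', Rc j') • y j := by
    funext m j'
    simp only [Finset.sum_apply, Pi.smul_apply, smul_eq_mul, Pi.mul_apply]
    rw [Finset.sum_eq_single j']
    · have := congrFun (hyx j') m
      simp only [projL, LinearMap.coe_mk, AddHom.coe_mk] at this
      simp [this]
      exact this.symm
    · intro b _ hb
      simp [Pi.single_apply, hb]
    · simp
  rw [hx]
  exact Submodule.sum_mem N fun j _ => Submodule.smul_mem N _ (hy j)

end Aux

/-- Let `R ≅ R₁ × ⋯ × R_ρ` be a finite commutative principal ideal ring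
decomposed (via the structure theorem) into finite chain rings, and let `Φⱼ` be the `j`-th
coordinate projection applied coefficient-by-coefficient.  Then for any `R`-submodule `N` of
`R^n` we have `rk_R(N) = max_j rk_{Rⱼ}(Φⱼ(N))`. -/
theorem rank_of_submodule_eq_sup_rank_of_projections
    (ι : Type*) [Fintype ι] [Nonempty ι] (Rc : ι → Type*)
    [∀ j, CommRing (Rc j)] [∀ j, Finite (Rc j)] [∀ j, IsLocalRing (Rc j)]
    [∀ j, IsPrincipalIdealRing (Rc j)]
    (n : ℕ) (N : Submodule (∀ j, Rc j) (Fin n → ∀ j, Rc j)) :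
    subrank N =
      Finset.univ.sup' Finset.univ_nonempty (fun j =>
        subrank (Submodule.span (Rc j)
          ((fun (v : Fin n → ∀ j, Rc j) (i : Fin n) => v i j) ''
            (N : Set (Fin n → ∀ j, Rc j))))) := by
  classical
  have hspan : ∀ j : ι, Submodule.span (Rc j)
      ((fun (v : Fin n → ∀ j, Rc j) (i : Fin n) => v i j) '' (N : Set (Fin n → ∀ j, Rc j)))
      = N.map (projL Rc n j) := by
    intro j
    have : (fun (v : Fin n → ∀ j, Rc j) (i : Fin n) => v i j) '' (N : Set (Fin n → ∀ j, Rc j))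
        = (N.map (projL Rc n j) : Set (Fin n → Rc j)) := rfl
    rw [this, Submodule.span_eq]
  simp only [hspan]
  apply le_antisymm
  · set s := Finset.univ.sup' Finset.univ_nonempty
      (fun j => subrank (N.map (projL Rc n j))) with hs
    have H : ∀ j : ι, ∃ f : Fin (subrank (N.map (projL Rc n j))) → (Fin n → Rc j),
        Submodule.span (Rc j) (Set.range f) = N.map (projL Rc n j) := fun j => by
      have h1 : subrank (N.map (projL Rc n j)) ∈ {k | ∃ f : Fin k → (Fin n → Rc j),
          Submodule.span (Rc j) (Set.range f) = N.map (projL Rc n j)} := by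
        refine Nat.sInf_mem ?_
        obtain ⟨k, f, hf⟩ := exists_fin_span (N.map (projL Rc n j))
        exact ⟨k, f, hf⟩
      exact h1
    choose f hf using H
    set gj : ∀ j : ι, Fin s → (Fin n → Rc j) := fun j i =>
      if h : (i : ℕ) < subrank (N.map (projL Rc n j)) then f j ⟨i, h⟩ else 0 with hgj
    have hgj_span : ∀ j, Submodule.span (Rc j) (Set.range (gj j)) = N.map (projL Rc n j) := by
      intro j
      apply le_antisymm
      · rw [Submodule.span_le]
        rintro _ ⟨i, rfl⟩
        by_cases h : (i : ℕ) < subrank (N.map (projL Rc n j))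
        · simp only [hgj, dif_pos h]
          have h2 : f j ⟨(i : ℕ), h⟩ ∈ Submodule.span (Rc j) (Set.range (f j)) :=
            Submodule.subset_span ⟨_, rfl⟩
          rwa [hf j] at h2
        · simp only [hgj, dif_neg h]
          exact (N.map (projL Rc n j)).zero_mem
      · rw [← hf j, Submodule.span_le]
        rintro _ ⟨i, rfl⟩
        refine Submodule.subset_span
          ⟨⟨(i : ℕ), lt_of_lt_of_le i.2 (Finset.le_sup' (fun j => subrank (N.map (projL Rc n j))) (Finset.mem_univ j))⟩, ?_⟩
        simp [hgj, i.2]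
    set g : Fin s → (Fin n → ∀ j, Rc j) := fun i m j => gj j i m with hg
    have hproj : ∀ j i, projL Rc n j (g i) = gj j i := fun _ _ => rfl
    have hgN : ∀ i, g i ∈ N := by
      intro i
      refine mem_of_proj N (g i) fun j => ?_
      rw [hproj, ← hgj_span j]
      exact Submodule.subset_span ⟨i, rfl⟩
    have hspan2 : Submodule.span (∀ j, Rc j) (Set.range g) = N := by
      apply le_antisymm
      · rw [Submodule.span_le]
        rintro _ ⟨i, rfl⟩
        exact hgN i
      · intro x hx
        rw [← sum_single_smul x]
        refine Submodule.sum_mem _ fun j _ => ?_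
        have hxj : projL Rc n j x ∈ Submodule.span (Rc j) (Set.range (gj j)) := by
          rw [hgj_span j]; exact ⟨x, hx, rfl⟩
        obtain ⟨c, hc⟩ := (Submodule.mem_span_range_iff_exists_fun (Rc j)).mp hxj
        have key : (Pi.single j (1 : Rc j) : ∀ j', Rc j') • x
            = ∑ i, (Pi.single j (c i) : ∀ j', Rc j') • g i := by
          funext m j'
          simp only [Finset.sum_apply, Pi.smul_apply, smul_eq_mul, Pi.mul_apply]
          by_cases hj : j' = j
          · subst hj
            have := congrFun hc m
            simp only [Finset.sum_apply, Pi.smul_apply, smul_eq_mul] at this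
            simp only [projL, LinearMap.coe_mk, AddHom.coe_mk] at this
            simpa [hg] using (show x m j' = _ from this.symm)
          · simp [Pi.single_apply, Ne.symm hj]
        rw [key]
        exact Submodule.sum_mem _ fun i _ =>
          Submodule.smul_mem _ _ (Submodule.subset_span ⟨i, rfl⟩)
    exact Nat.sInf_le ⟨g, hspan2⟩
  · -- each projection rank ≤ subrank N
    apply Finset.sup'_le
    intro j _
    obtain ⟨f, hf⟩ := Nat.sInf_mem (s := {k | ∃ f : Fin k → (Fin n → ∀ j, Rc j),
        Submodule.span _ (Set.range f) = N}) (exists_fin_span N)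
    apply Nat.sInf_le
    refine ⟨fun i => projL Rc n j (f i), ?_⟩
    have h2 := congrArg (Submodule.map (projL Rc n j)) hf
    rw [Submodule.map_span, ← Set.range_comp] at h2
    exact h2
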